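/- Let G be a finite simple graph, P a path in G with G - V(P) k-connected, and let R be a terminal subpath of P of order l such that every vertex u of R satisfies |N_G(u) ∩ V(G - V(P))| ≥ k + 1. Then G - V(Q) is k-connected, where Q = P - V(R). -/
import Mathlib


open SimpleGraph Set

/-- `KConn G k` means the vertex connectivity of `G` is at least `k`:
removing any set of fewer than `k` vertices leaves at least two vertices
and a connected graph. -/
def KConn {V : Type*} (G : SimpleGraph V) (k : ℕ) : Prop :=
  ∀ S : Set V, S.ncard < k → 2 ≤ Sᶜ.ncard ∧ (G.induce Sᶜ).Connected

/-- `addClique G S` is `G⟨S⟩`: the graph `G` with all edges among `S` added. -/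
def addClique {V : Type*} (G : SimpleGraph V) (S : Set V) : SimpleGraph V :=
  G ⊔ SimpleGraph.fromRel (fun u v => u ∈ S ∧ v ∈ S)

/-- `IsSemifragment G S F`: `F` is a union of at least one but not all
connected components of `G - S`, i.e. `F` is a nonempty subset of `Sᶜ`,
its complement in `Sᶜ` is nonempty, and there are no edges from `F` to
the rest of `G - S`. -/
def IsSemifragment {V : Type*} (G : SimpleGraph V) (S F : Set V) : Prop :=
  F.Nonempty ∧ (Sᶜ \ F).Nonempty ∧ F ⊆ Sᶜ ∧
    ∀ u ∈ F, ∀ w ∈ Sᶜ \ F, ¬ G.Adj u w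

/-- `(G, C) ∈ 𝒦ᵇ_k(t)`: `G` is `k`-connected, `C` is a clique of order `k`,
`G - V(C)` is bipartite with every one of its vertices having degree (in `G`)
at least `k + t`, and adjacent vertices outside `C` have no common neighbor. -/
def KClassB {V : Type*} (G : SimpleGraph V) (C : Set V) (k t : ℕ) : Prop :=
  KConn G k ∧ C.ncard = k ∧ (∀ u ∈ C, ∀ v ∈ C, u ≠ v → G.Adj u v) ∧
    (G.induce Cᶜ).Colorable 2 ∧ (∀ v ∈ Cᶜ, k + t ≤ (G.neighborSet v).ncard) ∧
    ∀ u ∈ Cᶜ, ∀ v ∈ Cᶜ, G.Adj u v → ∀ w, ¬(G.Adj u w ∧ G.Adj v w)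

/-- If G - V(P) is k-connected and R is a terminal subpath of P of order l all
of whose vertices have at least k+1 neighbors outside P, then G - V(Q) is
k-connected, where Q = P - V(R). -/
theorem stmt15 {V : Type*} [Fintype V] (G : SimpleGraph V) (k l : ℕ)
    {a b : V} (p : G.Walk a b) (hp : p.IsPath)
    (hGP : KConn (G.induce {x | x ∈ p.support}ᶜ) k)
    (qs rs : List V) (hsplit : p.support = qs ++ rs) (hl : rs.length = l)
    (hdeg : ∀ u ∈ rs, k + 1 ≤ ((G.neighborSet u) ∩ {x | x ∉ p.support}).ncard) :
    KConn (G.induce {x | x ∈ qs}ᶜ) k := by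
  intro S hS
  have hAB : ({x | x ∈ p.support}ᶜ : Set V) ⊆ ({x | x ∈ qs}ᶜ : Set V) := by
    intro x hx hxq
    exact hx (by simp only [Set.mem_setOf_eq, hsplit]; exact List.mem_append_left _ hxq)
  set S0 : Set V := Subtype.val '' S with hS0def
  have hS0card : S0.ncard = S.ncard := Set.ncard_image_of_injective _ Subtype.val_injective
  set S' : Set ↥({x | x ∈ p.support}ᶜ : Set V) := {a | (a : V) ∈ S0} with hS'def
  have hS'card : S'.ncard < k := by
    have h1 : (Subtype.val '' S').ncard = S'.ncard :=
      Set.ncard_image_of_injective _ Subtype.val_injective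
    have h2 : Subtype.val '' S' ⊆ S0 := by rintro x ⟨c, hc, rfl⟩; exact hc
    calc S'.ncard = (Subtype.val '' S').ncard := h1.symm
      _ ≤ S0.ncard := Set.ncard_le_ncard h2 (Set.toFinite _)
      _ = S.ncard := hS0card
      _ < k := hS
  obtain ⟨hcard2, hconn⟩ := hGP S' hS'card
  -- the inclusion map
  let f : ↥(S'ᶜ) → ↥(Sᶜ) := fun c =>
    ⟨⟨c.1.1, hAB c.1.2⟩, fun hmem => c.2 ⟨⟨c.1.1, hAB c.1.2⟩, hmem, rfl⟩⟩
  have hf_inj : Function.Injective f := by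
    intro c d h
    apply Subtype.ext; apply Subtype.ext
    exact congrArg (fun x => ((x : ↥({x | x ∈ qs}ᶜ : Set V)) : V)) (congrArg Subtype.val h)
  let φ : ((G.induce ({x | x ∈ p.support}ᶜ : Set V)).induce (S'ᶜ)) →g
      ((G.induce ({x | x ∈ qs}ᶜ : Set V)).induce (Sᶜ)) := ⟨f, fun h => h⟩
  constructor
  · -- cardinality
    set g : ↥({x | x ∈ p.support}ᶜ : Set V) → ↥({x | x ∈ qs}ᶜ : Set V) :=
      fun c => ⟨c.1, hAB c.2⟩ with hgdef
    have hg_inj : Function.Injective g := by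
      intro c d h
      have h2 : ((g c : ↥({x | x ∈ qs}ᶜ : Set V)) : V) = ((g d : _) : V) :=
        congrArg Subtype.val h
      exact Subtype.ext h2
    calc (2 : ℕ) ≤ (S'ᶜ).ncard := hcard2
      _ = (g '' (S'ᶜ)).ncard := (Set.ncard_image_of_injective _ hg_inj).symm
      _ ≤ (Sᶜ).ncard := Set.ncard_le_ncard
        (by rintro x ⟨c, hc, rfl⟩; exact fun hmem => hc ⟨g c, hmem, rfl⟩)
        (Set.toFinite _)
  · -- connectivity
    have key : ∀ u : ↥(Sᶜ), ∃ c : ↥(S'ᶜ),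
        ((G.induce ({x | x ∈ qs}ᶜ : Set V)).induce (Sᶜ)).Reachable u (f c) := by
      intro u
      by_cases hA : u.1.1 ∈ p.support
      · -- u is a vertex of rs
        have hr : u.1.1 ∈ rs := by
          have := hA
          rw [hsplit] at this
          exact (List.mem_append.mp this).resolve_left u.1.2
        have hdegu := hdeg u.1.1 hr
        have hnsub : ¬ (G.neighborSet u.1.1 ∩ {x | x ∉ p.support} ⊆ S0) := by
          intro hsub
          have := Set.ncard_le_ncard hsub (Set.toFinite _)
          omega
        obtain ⟨w, hwN, hwS0⟩ := Set.not_subset.mp hnsub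
        refine ⟨⟨⟨w, hwN.2⟩, hwS0⟩, ?_⟩
        exact SimpleGraph.Adj.reachable hwN.1
      · -- u is outside P
        have hu0 : u.1.1 ∉ S0 := by
          rintro ⟨s, hsS, hs⟩
          exact u.2 (by rwa [show s = u.1 from Subtype.ext hs] at hsS)
        refine ⟨⟨⟨u.1.1, hA⟩, hu0⟩, ?_⟩
        have : f ⟨⟨u.1.1, hA⟩, hu0⟩ = u := Subtype.ext (Subtype.ext rfl)
        rw [this]
    have hne : Nonempty ↥(Sᶜ) := by
      have : (S'ᶜ : Set _).Nonempty := by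
        apply Set.nonempty_of_ncard_ne_zero; omega
      obtain ⟨c, hc⟩ := this
      exact ⟨f ⟨c, hc⟩⟩
    haveI := hne
    apply SimpleGraph.Connected.mk
    intro u v
    obtain ⟨cu, hcu⟩ := key u
    obtain ⟨cv, hcv⟩ := key v
    have hφ : ∀ c, φ c = f c := fun _ => rfl
    exact hcu.trans (SimpleGraph.Reachable.trans
      (hφ cu ▸ hφ cv ▸ (hconn.preconnected cu cv).map φ) hcv.symm)
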